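/- Let h, σ, ω, V, L > 0, B̃ < 0, and 0 < p_L ≤ p_U. Define J_s(p) = (V − B̃·p)·L/(ω·log₂(1 + h·p/σ)) and let p₀ be the unique positive root of Ξ(p) = −B̃·log₂(1 + h·p/σ) − (h/((σ + h·p)·ln 2))·(V − B̃·p). Then J_s is decreasing on (0, p₀] and increasing on [p₀, ∞), and J_s attains its minimum over [p_L, p_U] at the point min(max(p₀, p_L), p_U) (i.e., at p₀ clamped to [p_L, p_U]). -/

import Mathlib

/-- For `B̃ < 0`, the offloading objective `J_s(p) = (V − B̃p)·L/(ω·log₂(1+hp/σ))`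
is decreasing on `(0, p₀]` and increasing on `[p₀, ∞)`, where `p₀` is the unique
positive root of `Ξ`, so its minimum over `[p_L, p_U]` is attained at `p₀` clamped
to `[p_L, p_U]`. -/
theorem stmt_11 (h σ ω V L Btilde : ℝ) (hh : 0 < h) (hσ : 0 < σ) (hω : 0 < ω)
    (hV : 0 < V) (hL : 0 < L) (hB : Btilde < 0)
    (pL pU : ℝ) (hpL : 0 < pL) (hLU : pL ≤ pU)
    (Js Ξ : ℝ → ℝ)
    (hJs : ∀ p, Js p = (V - Btilde * p) * L / (ω * Real.logb 2 (1 + h * p / σ)))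
    (hΞ : ∀ p, Ξ p = -Btilde * Real.logb 2 (1 + h * p / σ)
      - (h / ((σ + h * p) * Real.log 2)) * (V - Btilde * p))
    (p₀ : ℝ) (hp₀pos : 0 < p₀) (hp₀root : Ξ p₀ = 0)
    (hp₀uniq : ∀ p : ℝ, 0 < p → Ξ p = 0 → p = p₀) :
    AntitoneOn Js (Set.Ioc 0 p₀) ∧
    MonotoneOn Js (Set.Ici p₀) ∧
    (∀ p ∈ Set.Icc pL pU, Js (min (max p₀ pL) pU) ≤ Js p) := by
  have hln2 : (0:ℝ) < Real.log 2 := Real.log_pos one_lt_two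
  -- basic positivity facts for p ≥ 0
  have hden : ∀ p : ℝ, 0 ≤ p → 0 < σ + h * p := by
    intro p hp; nlinarith
  have hup : ∀ p : ℝ, 0 ≤ p → 0 < 1 + h * p / σ := by
    intro p hp
    have : 0 ≤ h * p / σ := by positivity
    linarith
  -- derivative of p ↦ log (1 + h p / σ)
  have hderiv_log : ∀ p : ℝ, 0 ≤ p →
      HasDerivAt (fun q => Real.log (1 + h * q / σ)) (h / (σ + h * p)) p := by
    intro p hp
    have hu : HasDerivAt (fun q : ℝ => 1 + h * q / σ) (h / σ) p := by
      simpa using (((hasDerivAt_id p).const_mul h).div_const σ).const_add 1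
    have := hu.log (ne_of_gt (hup p hp))
    convert this using 1
    have h1 := hden p hp
    field_simp
  -- derivative of Ξ
  have hderiv_Ξ : ∀ p : ℝ, 0 ≤ p →
      HasDerivAt Ξ (h ^ 2 * (V - Btilde * p) / ((σ + h * p) ^ 2 * Real.log 2)) p := by
    intro p hp
    have hd0 : (σ + h * p) * Real.log 2 ≠ 0 := by positivity
    have h1 : HasDerivAt (fun q => -Btilde * (Real.log (1 + h * q / σ) / Real.log 2))
        (-Btilde * (h / (σ + h * p) / Real.log 2)) p :=
      ((hderiv_log p hp).div_const (Real.log 2)).const_mul (-Btilde)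
    have hn : HasDerivAt (fun q : ℝ => h * (V - Btilde * q)) (h * (-Btilde)) p := by
      have : HasDerivAt (fun q : ℝ => V - Btilde * q) (-Btilde) p := by
        simpa using ((hasDerivAt_id p).const_mul Btilde).const_sub V
      simpa using this.const_mul h
    have hd : HasDerivAt (fun q : ℝ => (σ + h * q) * Real.log 2) (h * Real.log 2) p := by
      have : HasDerivAt (fun q : ℝ => σ + h * q) h p := by
        simpa using ((hasDerivAt_id p).const_mul h).const_add σ
      simpa using this.mul_const (Real.log 2)
    have h2 := hn.div hd hd0
    have hF := h1.sub h2
    have hEq : Ξ = fun q => -Btilde * (Real.log (1 + h * q / σ) / Real.log 2)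
        - h * (V - Btilde * q) / ((σ + h * q) * Real.log 2) := by
      funext q
      rw [hΞ, Real.logb]
      ring
    rw [hEq]
    refine hF.congr_deriv ?_
    have h1' := hden p hp
    field_simp
    ring
  -- Ξ is strictly monotone on [0, ∞)
  have hΞmono : StrictMonoOn Ξ (Set.Ici 0) := by
    apply strictMonoOn_of_deriv_pos (convex_Ici 0)
    · intro x hx
      exact ((hderiv_Ξ x hx).continuousAt).continuousWithinAt
    · intro x hx
      rw [interior_Ici] at hx
      rw [(hderiv_Ξ x (le_of_lt hx)).deriv]
      have hx' : (0:ℝ) < x := hx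
      have hV' : 0 < V - Btilde * x := by nlinarith [mul_neg_of_neg_of_pos hB hx']
      have := hden x (le_of_lt hx)
      positivity
  have hΞneg : ∀ x : ℝ, 0 < x → x < p₀ → Ξ x < 0 := by
    intro x hx hxp
    have := hΞmono (le_of_lt hx) (le_of_lt hp₀pos) hxp
    linarith [hp₀root ▸ this]
  have hΞpos : ∀ x : ℝ, p₀ < x → 0 < Ξ x := by
    intro x hx
    have := hΞmono (le_of_lt hp₀pos) (le_of_lt (lt_trans hp₀pos hx)) hx
    rw [hp₀root] at this
    exact this
  -- derivative of Js
  have hlogpos : ∀ p : ℝ, 0 < p → 0 < Real.logb 2 (1 + h * p / σ) := by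
    intro p hp
    apply Real.logb_pos one_lt_two
    have : 0 < h * p / σ := by positivity
    linarith
  have hderiv_Js : ∀ p : ℝ, 0 < p →
      HasDerivAt Js (L * ω * Ξ p / (ω * Real.logb 2 (1 + h * p / σ)) ^ 2) p := by
    intro p hp
    have hgpos : 0 < ω * Real.logb 2 (1 + h * p / σ) :=
      mul_pos hω (hlogpos p hp)
    have hf : HasDerivAt (fun q : ℝ => (V - Btilde * q) * L) (-Btilde * L) p := by
      have : HasDerivAt (fun q : ℝ => V - Btilde * q) (-Btilde) p := by
        simpa using ((hasDerivAt_id p).const_mul Btilde).const_sub V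
      simpa using this.mul_const L
    have hg : HasDerivAt (fun q : ℝ => ω * Real.logb 2 (1 + h * q / σ))
        (ω * (h / ((σ + h * p) * Real.log 2))) p := by
      have hlb : HasDerivAt (fun q => Real.logb 2 (1 + h * q / σ))
          (h / ((σ + h * p) * Real.log 2)) p := by
        have := (hderiv_log p (le_of_lt hp)).div_const (Real.log 2)
        have hEq : (fun q => Real.logb 2 (1 + h * q / σ))
            = fun q => Real.log (1 + h * q / σ) / Real.log 2 := by
          funext q; rw [Real.logb]
        rw [hEq]
        refine this.congr_deriv ?_
        rw [div_div]
      exact hlb.const_mul ω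
    have hEqJ : Js = fun q => (V - Btilde * q) * L / (ω * Real.logb 2 (1 + h * q / σ)) :=
      funext hJs
    rw [hEqJ]
    have := hf.div hg (ne_of_gt hgpos)
    refine this.congr_deriv ?_
    rw [hΞ]
    have h1' := hden p (le_of_lt hp)
    field_simp
  have hcont : ∀ p : ℝ, 0 < p → ContinuousAt Js p := fun p hp =>
    (hderiv_Js p hp).continuousAt
  -- antitone part
  have hanti : AntitoneOn Js (Set.Ioc 0 p₀) := by
    apply antitoneOn_of_deriv_nonpos (convex_Ioc 0 p₀)
    · intro x hx; exact (hcont x hx.1).continuousWithinAt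
    · rw [interior_Ioc]
      intro x hx
      exact ((hderiv_Js x hx.1).differentiableAt).differentiableWithinAt
    · rw [interior_Ioc]
      intro x hx
      rw [(hderiv_Js x hx.1).deriv]
      apply div_nonpos_of_nonpos_of_nonneg
      · exact le_of_lt (mul_neg_of_pos_of_neg (mul_pos hL hω) (hΞneg x hx.1 hx.2))
      · positivity
  have hmono : MonotoneOn Js (Set.Ici p₀) := by
    apply monotoneOn_of_deriv_nonneg (convex_Ici p₀)
    · intro x hx; exact (hcont x (lt_of_lt_of_le hp₀pos hx)).continuousWithinAt
    · rw [interior_Ici]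
      intro x hx
      exact ((hderiv_Js x (lt_trans hp₀pos hx)).differentiableAt).differentiableWithinAt
    · rw [interior_Ici]
      intro x hx
      rw [(hderiv_Js x (lt_trans hp₀pos hx)).deriv]
      apply div_nonneg
      · exact le_of_lt (mul_pos (mul_pos hL hω) (hΞpos x hx))
      · positivity
  refine ⟨hanti, hmono, ?_⟩
  intro p hp
  set c := min (max p₀ pL) pU with hc
  have hcL : pL ≤ c := le_min (le_max_right _ _) hLU
  have hcU : c ≤ pU := min_le_right _ _
  rcases le_or_gt p c with hpc | hpc
  · rcases le_or_gt pL p₀ with hLp | hLp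
    · -- c ≤ p₀, use antitone
      have hcp₀ : c ≤ p₀ := le_trans (min_le_left _ _) (by rw [max_eq_left hLp])
      have hpmem : p ∈ Set.Ioc 0 p₀ :=
        ⟨lt_of_lt_of_le hpL hp.1, le_trans hpc hcp₀⟩
      have hcmem : c ∈ Set.Ioc 0 p₀ := ⟨lt_of_lt_of_le hpL hcL, hcp₀⟩
      exact hanti hpmem hcmem hpc
    · -- c = pL ≤ p, so p = c
      have : c = pL := by
        rw [hc, max_eq_right (le_of_lt hLp), min_eq_left hLU]
      have : p = c := le_antisymm hpc (this ▸ hp.1)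
      rw [this]
  · -- c < p, use monotone; need p₀ ≤ c
    have hp₀c : p₀ ≤ c := by
      rcases le_or_gt p₀ pL with hLp | hLp
      · exact le_trans hLp hcL
      · rw [hc, max_eq_left (le_of_lt hLp)]
        rcases le_or_gt p₀ pU with hU | hU
        · rw [min_eq_left hU]
        · exfalso
          have : c = pU := by rw [hc, max_eq_left (le_of_lt hLp), min_eq_right (le_of_lt hU)]
          exact absurd hp.2 (not_le.mpr (this ▸ hpc))
    exact hmono (Set.mem_Ici.mpr hp₀c) (Set.mem_Ici.mpr (le_trans hp₀c (le_of_lt hpc))) (le_of_lt hpc)
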